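/- Let K₁, K₂ > 0 with K₁·K₂ > 1, M > α > β reals, and define Ψ(τ) = K₁⁻¹·e^(ατ) − K₂·e^(βτ) and τ₀ = ln(K₁K₂)/(α−β). Then the function Ψ̃(τ) = 2·e^(Mτ)/Ψ(τ) on (τ₀, ∞) attains its minimum at τ₁ = (ln(K₁K₂(M−β)) − ln(M−α))/(α−β), and the minimum value equals 2γK₁·(1 + 1/(γ−1))^(γ−1)·(K₁K₂)^(γ−1), where γ = (M−β)/(α−β) > 1. -/

import Mathlib

open Real Set

theorem stmt_8 (K₁ K₂ M α β : ℝ) (hK₁ : 0 < K₁) (hK₂ : 0 < K₂) (hKK : 1 < K₁ * K₂)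
    (hMα : α < M) (hαβ : β < α)
    (Ψ : ℝ → ℝ) (hΨ : ∀ τ, Ψ τ = K₁⁻¹ * Real.exp (α * τ) - K₂ * Real.exp (β * τ))
    (τ₀ τ₁ γ : ℝ) (hτ₀ : τ₀ = Real.log (K₁ * K₂) / (α - β))
    (hτ₁ : τ₁ = (Real.log (K₁ * K₂ * (M - β)) - Real.log (M - α)) / (α - β))
    (hγ : γ = (M - β) / (α - β)) :
    τ₀ < τ₁ ∧
    (∀ τ : ℝ, τ₀ < τ → 2 * Real.exp (M * τ₁) / Ψ τ₁ ≤ 2 * Real.exp (M * τ) / Ψ τ) ∧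
    2 * Real.exp (M * τ₁) / Ψ τ₁
      = 2 * γ * K₁ * (1 + 1 / (γ - 1)) ^ (γ - 1) * (K₁ * K₂) ^ (γ - 1) := by
  have hαβ' : 0 < α - β := sub_pos.2 hαβ
  have hMα' : 0 < M - α := sub_pos.2 hMα
  have hMβ' : 0 < M - β := by linarith
  have hKK0 : 0 < K₁ * K₂ := mul_pos hK₁ hK₂
  have hγ1 : 1 < γ := by
    rw [hγ, lt_div_iff₀ hαβ']; linarith
  have hγ0 : 0 < γ := by linarith
  have hγ1' : 0 < γ - 1 := by linarith
  have hγe : γ * (α - β) = M - β := by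
    rw [hγ]; field_simp
  -- the critical point in the x = exp((α-β)τ) variable
  set x₁ : ℝ := K₁ * K₂ * (γ / (γ - 1)) with hx₁def
  have hx₁pos : 0 < x₁ := by
    have : 0 < γ / (γ - 1) := div_pos hγ0 hγ1'
    positivity
  have hx₁ : Real.exp ((α - β) * τ₁) = x₁ := by
    have h1 : (α - β) * τ₁ = Real.log (K₁ * K₂ * (M - β)) - Real.log (M - α) := by
      rw [hτ₁]; field_simp
    rw [h1, Real.exp_sub, Real.exp_log (by positivity), Real.exp_log hMα', hx₁def]
    have h2 : γ / (γ - 1) = (M - β) / (M - α) := by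
      rw [div_eq_div_iff hγ1'.ne' hMα'.ne']
      linear_combination -hγe
    rw [h2]; ring
  have hden₁ : K₁⁻¹ * x₁ - K₂ = K₂ / (γ - 1) := by
    rw [hx₁def]; field_simp; ring
  have hden₁pos : 0 < K₁⁻¹ * x₁ - K₂ := by rw [hden₁]; positivity
  -- rewrite Ψ and exp(Mτ)
  have hΨ' : ∀ τ : ℝ, Ψ τ = Real.exp (β * τ) * (K₁⁻¹ * Real.exp ((α - β) * τ) - K₂) := by
    intro τ
    rw [hΨ τ, mul_sub, ← mul_assoc, mul_comm (Real.exp (β * τ)) K₁⁻¹, mul_assoc,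
      ← Real.exp_add]
    ring_nf
  have hM' : ∀ τ : ℝ, Real.exp (M * τ) = Real.exp (β * τ) * (Real.exp ((α - β) * τ)) ^ γ := by
    intro τ
    rw [← Real.exp_mul, ← Real.exp_add]
    congr 1
    linear_combination (-τ) * hγe
  -- key inequality in the x variable
  have key : ∀ x : ℝ, K₁ * K₂ < x →
      2 * x₁ ^ γ / (K₁⁻¹ * x₁ - K₂) ≤ 2 * x ^ γ / (K₁⁻¹ * x - K₂) := by
    intro x hx
    have hx0 : 0 < x := lt_trans hKK0 hx
    have hdx : 0 < K₁⁻¹ * x - K₂ := by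
      have h1 : K₁⁻¹ * (K₁ * K₂) = K₂ := by field_simp
      nlinarith [mul_lt_mul_of_pos_left hx (inv_pos.2 hK₁)]
    rw [div_le_div_iff₀ hden₁pos hdx]
    have hber : 1 + γ * (x / x₁ - 1) ≤ (x / x₁) ^ γ := by
      have h := one_add_mul_self_le_rpow_one_add (s := x / x₁ - 1)
        (by nlinarith [div_pos hx0 hx₁pos]) hγ1.le
      simpa using h
    have hdiv : (x / x₁) ^ γ = x ^ γ / x₁ ^ γ := Real.div_rpow hx0.le hx₁pos.le γ
    have hx₁γ : 0 < x₁ ^ γ := Real.rpow_pos_of_pos hx₁pos γ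
    have h2 : x₁ ^ γ * (1 + γ * (x / x₁ - 1)) ≤ x ^ γ := by
      calc x₁ ^ γ * (1 + γ * (x / x₁ - 1)) ≤ x₁ ^ γ * ((x / x₁) ^ γ) := by
            exact mul_le_mul_of_nonneg_left hber hx₁γ.le
        _ = x ^ γ := by rw [hdiv]; field_simp
    have hlin : K₁⁻¹ * x - K₂ = (1 + γ * (x / x₁ - 1)) * (K₂ / (γ - 1)) := by
      rw [hx₁def]; field_simp; ring
    rw [hlin, hden₁]
    have hpos : 0 < K₂ / (γ - 1) := by positivity
    nlinarith [h2, hpos]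
  -- exp((α-β)τ) > K₁K₂ for τ > τ₀
  have hxgt : ∀ τ : ℝ, τ₀ < τ → K₁ * K₂ < Real.exp ((α - β) * τ) := by
    intro τ h
    rw [hτ₀, div_lt_iff₀ hαβ'] at h
    calc K₁ * K₂ = Real.exp (Real.log (K₁ * K₂)) := (Real.exp_log hKK0).symm
      _ < Real.exp ((α - β) * τ) := Real.exp_lt_exp.2 (by linarith [h, mul_comm τ (α - β)])
  -- rewriting F
  have hF : ∀ τ : ℝ, 2 * Real.exp (M * τ) / Ψ τ
      = 2 * (Real.exp ((α - β) * τ)) ^ γ / (K₁⁻¹ * Real.exp ((α - β) * τ) - K₂) := by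
    intro τ
    rw [hΨ' τ, hM' τ,
      show 2 * (Real.exp (β * τ) * (Real.exp ((α - β) * τ)) ^ γ)
        = Real.exp (β * τ) * (2 * (Real.exp ((α - β) * τ)) ^ γ) from by ring,
      mul_div_mul_left _ _ (Real.exp_ne_zero _)]
  -- τ₀ < τ₁
  have hττ : τ₀ < τ₁ := by
    rw [hτ₀, hτ₁]
    have hlog : Real.log (K₁ * K₂ * (M - β)) = Real.log (K₁ * K₂) + Real.log (M - β) :=
      Real.log_mul hKK0.ne' hMβ'.ne'
    have hll : Real.log (M - α) < Real.log (M - β) := Real.log_lt_log hMα' (by linarith)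
    gcongr ?_ / (α - β)
    linarith
  refine ⟨hττ, ?_, ?_⟩
  · intro τ hτ
    rw [hF τ, hF τ₁, hx₁]
    exact key _ (hxgt τ hτ)
  · rw [hF τ₁, hx₁, hden₁]
    have h1p : (1 : ℝ) + 1 / (γ - 1) = γ / (γ - 1) := by field_simp; ring
    have hq : 0 < γ / (γ - 1) := div_pos hγ0 hγ1'
    have hsplit : ∀ a : ℝ, 0 < a → a ^ γ = a ^ (γ - 1) * a := by
      intro a ha
      rw [← Real.rpow_add_one ha.ne' (γ - 1)]
      norm_num
    have hx₁γ : x₁ ^ γ = (K₁ * K₂) ^ (γ - 1) * (K₁ * K₂) * ((γ / (γ - 1)) ^ (γ - 1) * (γ / (γ - 1))) := by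
      rw [hx₁def, Real.mul_rpow hKK0.le hq.le, hsplit _ hKK0, hsplit _ hq]
    rw [hx₁γ, h1p]
    have hA : (0:ℝ) ≤ (K₁ * K₂) ^ (γ - 1) := Real.rpow_nonneg hKK0.le _
    have hB : (0:ℝ) ≤ (γ / (γ - 1)) ^ (γ - 1) := Real.rpow_nonneg hq.le _
    field_simp
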